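/- For odd n ≥ 3 there is no two-outcome measurement consisting of two extremal effects: there exist no indices j, k and no positive scalars λ, μ with λ e_j + μ e_k = u. -/

import Mathlib

open Real

noncomputable def rn (n : ℕ) : ℝ := Real.sqrt (1 / Real.cos (π / n))

noncomputable def ωst (n : ℕ) (i : ℤ) : Fin 3 → ℝ :=
  ![rn n * Real.cos (2 * π * (i : ℝ) / n), rn n * Real.sin (2 * π * (i : ℝ) / n), 1]

noncomputable def eEv (n : ℕ) (j : ℤ) : Fin 3 → ℝ :=
  ![rn n * Real.cos ((2 * (j : ℝ) - 1) * π / n) / 2,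
    rn n * Real.sin ((2 * (j : ℝ) - 1) * π / n) / 2, 1 / 2]

noncomputable def eOd (n : ℕ) (j : ℤ) : Fin 3 → ℝ :=
  (1 / (1 + rn n ^ 2)) •
    ![rn n * Real.cos (2 * π * (j : ℝ) / n), rn n * Real.sin (2 * π * (j : ℝ) / n), 1]

noncomputable def ip (v w : Fin 3 → ℝ) : ℝ := v 0 * w 0 + v 1 * w 1 + v 2 * w 2

noncomputable def uE : Fin 3 → ℝ := ![0, 0, 1]

theorem ngon_odd_no_two_outcome_extremal_measurement (n : ℕ) (hn : Odd n) (h3 : 3 ≤ n) :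
    ¬ ∃ (j k : ℤ) (l μ : ℝ), 0 < l ∧ 0 < μ ∧ l • eOd n j + μ • eOd n k = uE := by
  rintro ⟨j, k, l, μ, hl, hμ, heq⟩
  have hnpos : (0:ℝ) < n := by positivity
  have hn3 : (3:ℝ) ≤ n := by exact_mod_cast h3
  have hcos : 0 < Real.cos (π / n) := by
    apply Real.cos_pos_of_mem_Ioo
    have hppos : 0 < π / n := by positivity
    constructor
    · linarith [Real.pi_pos]
    · rw [div_lt_div_iff₀ hnpos two_pos]
      nlinarith [Real.pi_pos]
  have hr : 0 < rn n := Real.sqrt_pos.2 (by positivity)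
  have hc : 0 < 1 / (1 + rn n ^ 2) := by positivity
  set A := 2 * π * (j : ℝ) / n with hA
  set B := 2 * π * (k : ℝ) / n with hB
  have h0 := congrFun heq 0
  have h1 := congrFun heq 1
  simp only [eOd, uE, Pi.add_apply, Pi.smul_apply, smul_eq_mul,
    Matrix.cons_val_zero, Matrix.cons_val_one, Matrix.head_cons] at h0 h1
  have hcne : (1 / (1 + rn n ^ 2)) ≠ 0 := ne_of_gt hc
  have hrne : rn n ≠ 0 := ne_of_gt hr
  have e0 : l * Real.cos A + μ * Real.cos B = 0 := by
    have h0' : (1 / (1 + rn n ^ 2)) * (rn n * (l * Real.cos A + μ * Real.cos B)) = 0 := by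
      rw [← h0]; ring
    rcases mul_eq_zero.1 h0' with h | h
    · exact absurd h hcne
    · rcases mul_eq_zero.1 h with h | h
      · exact absurd h hrne
      · exact h
  have e1 : l * Real.sin A + μ * Real.sin B = 0 := by
    have h1' : (1 / (1 + rn n ^ 2)) * (rn n * (l * Real.sin A + μ * Real.sin B)) = 0 := by
      rw [← h1]; ring
    rcases mul_eq_zero.1 h1' with h | h
    · exact absurd h hcne
    · rcases mul_eq_zero.1 h with h | h
      · exact absurd h hrne
      · exact h
  have hsq : (l * Real.cos A + μ * Real.cos B)^2 + (l * Real.sin A + μ * Real.sin B)^2 = 0 := by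
    rw [e0, e1]; ring
  have expand : (l * Real.cos A + μ * Real.cos B)^2 + (l * Real.sin A + μ * Real.sin B)^2
      = l^2 * (Real.sin A ^ 2 + Real.cos A ^ 2) + μ^2 * (Real.sin B ^ 2 + Real.cos B ^ 2)
        + 2 * l * μ * (Real.cos A * Real.cos B + Real.sin A * Real.sin B) := by ring
  rw [expand, Real.sin_sq_add_cos_sq, Real.sin_sq_add_cos_sq, ← Real.cos_sub] at hsq
  have hcosAB : Real.cos (A - B) = -1 := by
    nlinarith [Real.neg_one_le_cos (A - B), sq_nonneg (l - μ), mul_pos hl hμ]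
  have hone : Real.cos (A - B - π) = 1 := by
    rw [Real.cos_sub_pi, hcosAB]; ring
  obtain ⟨m, hm⟩ := (Real.cos_eq_one_iff _).1 hone
  have hpne : π ≠ 0 := ne_of_gt Real.pi_pos
  have hreal : ((2 * (j - k) : ℤ) : ℝ) = (((2 * m + 1) * n : ℤ) : ℝ) := by
    have hAB : A - B = 2 * π * ((j : ℝ) - k) / n := by rw [hA, hB]; ring
    push_cast
    rw [hAB] at hm
    have hn0 : (n:ℝ) ≠ 0 := ne_of_gt hnpos
    have key : π * (2 * ((j:ℝ) - k)) = π * ((2 * m + 1) * n) := by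
      have := congrArg (fun x : ℝ => x * (n:ℝ)) hm
      field_simp at this
      rw [show 2 * ((j:ℝ) - k) = (2 * m + 1) * n by linarith [this]]
    exact mul_left_cancel₀ hpne key
  have hint : (2 * (j - k) : ℤ) = (2 * m + 1) * n := by exact_mod_cast hreal
  obtain ⟨t, ht⟩ := hn
  have : Even ((2 * m + 1) * (n : ℤ)) := hint ▸ ⟨j - k, by ring⟩
  have hodd : Odd ((2 * m + 1) * (n : ℤ)) := by
    refine Odd.mul ⟨m, by ring⟩ ⟨t, by exact_mod_cast ht⟩
  exact (Int.not_even_iff_odd.2 hodd) this
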